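/- Fix x > 0 and let L = {x·v : v ∈ ℤ³} ∪ {x·(v + (1/2, 1/2, 1/2)) : v ∈ ℤ³} ⊂ ℝ³ be the body-centered cubic lattice of edge length x. Let F = {(0,0,0), (x,0,0), (x/2, x/2, x/2)}, a face of the body-centered cubic tetrahedral grid. Then the minimum bounding ball of F has center c = (x/2, x/8, x/8) and radius (3√2/8)·x, the infimum of ‖p − c‖ over p ∈ L \ F equals (√34/8)·x and is attained (for instance at (x/2, x/2, −x/2)), and hence the signed distance inf_{p ∈ L \ F} ‖p − c‖ − (3√2/8)·x equals ((√34 − 3√2)/8)·x, which is strictly positive; in particular F satisfies the Minimum-Ball condition with respect to L. -/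

import Mathlib

/-- A point of Euclidean 3-space with the given coordinates. -/
noncomputable def pt3 (a b c : ℝ) : EuclideanSpace ℝ (Fin 3) :=
  (WithLp.equiv 2 (Fin 3 → ℝ)).symm ![a, b, c]

lemma dist_pt3 (a b c d e f : ℝ) :
    dist (pt3 a b c) (pt3 d e f) =
      Real.sqrt ((a - d) ^ 2 + (b - e) ^ 2 + (c - f) ^ 2) := by
  simp [pt3, EuclideanSpace.dist_eq, Fin.sum_univ_three, Real.dist_eq, sq_abs]

lemma pt3_eq_iff {a b c d e f : ℝ} :
    pt3 a b c = pt3 d e f ↔ a = d ∧ b = e ∧ c = f := by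
  constructor
  · intro h
    exact ⟨congrArg (fun p => p 0) h, congrArg (fun p => p 1) h, congrArg (fun p => p 2) h⟩
  · rintro ⟨rfl, rfl, rfl⟩; rfl

lemma int_cases (a : ℤ) : (a:ℝ) ≤ 0 ∨ 1 ≤ (a:ℝ) := by
  rcases le_or_gt a 0 with h | h
  · exact Or.inl (by exact_mod_cast h)
  · exact Or.inr (by exact_mod_cast h)

lemma int_cases' (a : ℤ) (h : a ≠ 0) : (a:ℝ) ≤ -1 ∨ 1 ≤ (a:ℝ) := by
  rcases lt_or_lt_iff_ne.mpr h with h' | h'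
  · exact Or.inl (by exact_mod_cast (by omega : a ≤ -1))
  · exact Or.inr (by exact_mod_cast h')

lemma lb_typeA (a b c : ℤ) (h0 : ¬(a = 0 ∧ b = 0 ∧ c = 0)) (h1 : ¬(a = 1 ∧ b = 0 ∧ c = 0)) :
    (34:ℝ)/64 ≤ ((a:ℝ) - 1/2)^2 + ((b:ℝ) - 1/8)^2 + ((c:ℝ) - 1/8)^2 := by
  have ha2 := int_cases a
  have hb2 := int_cases b
  have hc2 := int_cases c
  by_cases hb : b = 0
  · by_cases hc : c = 0
    · have ha0 : a ≠ 0 := fun h => h0 ⟨h, hb, hc⟩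
      have ha1 : a ≠ 1 := fun h => h1 ⟨h, hb, hc⟩
      have ha3 : (a:ℝ) ≤ -1 ∨ 2 ≤ (a:ℝ) := by
        rcases lt_or_lt_iff_ne.mpr ha0 with h' | h'
        · exact Or.inl (by exact_mod_cast (by omega : a ≤ -1))
        · rcases lt_or_lt_iff_ne.mpr ha1 with h'' | h''
          · exact Or.inl (by exact_mod_cast (by omega : a ≤ -1))
          · exact Or.inr (by exact_mod_cast h'')
      subst hb hc
      rcases ha3 with h | h <;> nlinarith
    · have hc3 := int_cases' c hc
      rcases ha2 with h | h <;> rcases hc3 with h' | h' <;> nlinarith [sq_nonneg ((b:ℝ) - 1/8)]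
  · have hb3 := int_cases' b hb
    rcases ha2 with h | h <;> rcases hb3 with h' | h' <;> nlinarith [sq_nonneg ((c:ℝ) - 1/8)]

lemma lb_typeB (a b c : ℤ) (h0 : ¬(a = 0 ∧ b = 0 ∧ c = 0)) :
    (34:ℝ)/64 ≤ (a:ℝ)^2 + ((b:ℝ) + 3/8)^2 + ((c:ℝ) + 3/8)^2 := by
  have hb2 : (b:ℝ) ≤ -1 ∨ 0 ≤ (b:ℝ) := by
    rcases le_or_gt b (-1) with h | h
    · exact Or.inl (by exact_mod_cast h)
    · exact Or.inr (by exact_mod_cast (by omega : (0:ℤ) ≤ b))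
  have hc2 : (c:ℝ) ≤ -1 ∨ 0 ≤ (c:ℝ) := by
    rcases le_or_gt c (-1) with h | h
    · exact Or.inl (by exact_mod_cast h)
    · exact Or.inr (by exact_mod_cast (by omega : (0:ℤ) ≤ c))
  by_cases ha : a = 0
  · by_cases hb : b = 0
    · have hc : c ≠ 0 := fun h => h0 ⟨ha, hb, h⟩
      have hc3 := int_cases' c hc
      subst ha hb
      rcases hc3 with h | h <;> nlinarith
    · have hb3 := int_cases' b hb
      subst ha
      rcases hb3 with h | h <;> rcases hc2 with h' | h' <;> nlinarith
  · have ha3 := int_cases' a ha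
    rcases ha3 with h | h <;> rcases hb2 with h' | h' <;> rcases hc2 with h'' | h'' <;> nlinarith

/-- In the body-centered cubic lattice `L` of edge length `x > 0`,
the face `F = {(0,0,0), (x,0,0), (x/2,x/2,x/2)}` has minimum bounding ball of center
`c = (x/2, x/8, x/8)` and radius `(3√2/8)·x`; the infimum of `‖p − c‖` over `p ∈ L \ F`
equals `(√34/8)·x` and is attained at `(x/2, x/2, −x/2)`; hence the signed distance
equals `((√34 − 3√2)/8)·x > 0`, and in particular `F` satisfies the Minimum-Ball
condition with respect to `L`. -/
theorem bcc_lattice_minimum_ball (x : ℝ) (hx : 0 < x) :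
    let L : Set (EuclideanSpace ℝ (Fin 3)) :=
      {q | ∃ v : Fin 3 → ℤ, q = pt3 (x * v 0) (x * v 1) (x * v 2)} ∪
      {q | ∃ v : Fin 3 → ℤ, q = pt3 (x * (v 0 + 1 / 2)) (x * (v 1 + 1 / 2)) (x * (v 2 + 1 / 2))}
    let F : Set (EuclideanSpace ℝ (Fin 3)) :=
      {pt3 0 0 0, pt3 x 0 0, pt3 (x / 2) (x / 2) (x / 2)}
    let c : EuclideanSpace ℝ (Fin 3) := pt3 (x / 2) (x / 8) (x / 8)
    -- `c` is the circumcenter of `F` (equidistant point lying in the affine span of `F`),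
    -- so the minimum bounding ball of `F` has center `c` and radius `(3√2/8)·x`
    (∀ p ∈ F, dist p c = 3 * Real.sqrt 2 / 8 * x) ∧
    c ∈ affineSpan ℝ F ∧
    -- the infimum of `‖p − c‖` over `p ∈ L \ F` equals `(√34/8)·x` and is attained
    IsLeast ((fun p => dist p c) '' (L \ F)) (Real.sqrt 34 / 8 * x) ∧
    pt3 (x / 2) (x / 2) (-(x / 2)) ∈ L \ F ∧
    dist (pt3 (x / 2) (x / 2) (-(x / 2))) c = Real.sqrt 34 / 8 * x ∧
    -- the signed distance equals `((√34 − 3√2)/8)·x`, which is strictly positive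
    Real.sqrt 34 / 8 * x - 3 * Real.sqrt 2 / 8 * x = (Real.sqrt 34 - 3 * Real.sqrt 2) / 8 * x ∧
    0 < (Real.sqrt 34 - 3 * Real.sqrt 2) / 8 * x ∧
    -- Minimum-Ball condition: no point of `L \ F` lies strictly inside the ball
    ∀ p ∈ L \ F, ¬ dist p c < 3 * Real.sqrt 2 / 8 * x := by
  
  intro L F c
  have h2 : Real.sqrt 2 ^ 2 = 2 := Real.sq_sqrt (by norm_num)
  have h34 : Real.sqrt 34 ^ 2 = 34 := Real.sq_sqrt (by norm_num)
  have hs2 : 0 ≤ Real.sqrt 2 := Real.sqrt_nonneg 2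
  have hs34p : 0 < Real.sqrt 34 := Real.sqrt_pos.mpr (by norm_num)
  have hlt : 3 * Real.sqrt 2 < Real.sqrt 34 := by nlinarith
  have hcdef : c = pt3 (x / 2) (x / 8) (x / 8) := rfl
  -- equidistance
  have hF1 : dist (pt3 0 0 0) c = 3 * Real.sqrt 2 / 8 * x := by
    rw [hcdef, dist_pt3,
      show (0 - x/2)^2 + (0 - x/8)^2 + (0 - x/8)^2 = (3 * Real.sqrt 2 / 8 * x)^2 by
        linear_combination (-(9 * x^2) / 64) * h2]
    exact Real.sqrt_sq (mul_nonneg (by positivity) hx.le)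
  have hF2 : dist (pt3 x 0 0) c = 3 * Real.sqrt 2 / 8 * x := by
    rw [hcdef, dist_pt3,
      show (x - x/2)^2 + (0 - x/8)^2 + (0 - x/8)^2 = (3 * Real.sqrt 2 / 8 * x)^2 by
        linear_combination (-(9 * x^2) / 64) * h2]
    exact Real.sqrt_sq (mul_nonneg (by positivity) hx.le)
  have hF3 : dist (pt3 (x/2) (x/2) (x/2)) c = 3 * Real.sqrt 2 / 8 * x := by
    rw [hcdef, dist_pt3,
      show (x/2 - x/2)^2 + (x/2 - x/8)^2 + (x/2 - x/8)^2 = (3 * Real.sqrt 2 / 8 * x)^2 by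
        linear_combination (-(9 * x^2) / 64) * h2]
    exact Real.sqrt_sq (mul_nonneg (by positivity) hx.le)
  -- affine span
  have hm1 : pt3 0 0 0 ∈ F := Set.mem_insert _ _
  have hm2 : pt3 x 0 0 ∈ F := Set.mem_insert_of_mem _ (Set.mem_insert _ _)
  have hm3 : pt3 (x/2) (x/2) (x/2) ∈ F := Set.mem_insert_of_mem _ (Set.mem_insert_of_mem _ rfl)
  have hc_span : c ∈ affineSpan ℝ F := by
    have hv : ((3/8 : ℝ) • (pt3 x 0 0 -ᵥ pt3 0 0 0)
        + (1/4 : ℝ) • (pt3 (x/2) (x/2) (x/2) -ᵥ pt3 0 0 0)) ∈ (affineSpan ℝ F).direction := by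
      rw [direction_affineSpan]
      exact Submodule.add_mem _
        (Submodule.smul_mem _ _ (vsub_mem_vectorSpan ℝ hm2 hm1))
        (Submodule.smul_mem _ _ (vsub_mem_vectorSpan ℝ hm3 hm1))
    have hmem := AffineSubspace.vadd_mem_of_mem_direction hv (mem_affineSpan ℝ hm1)
    have hceq : c = ((3/8 : ℝ) • (pt3 x 0 0 -ᵥ pt3 0 0 0)
        + (1/4 : ℝ) • (pt3 (x/2) (x/2) (x/2) -ᵥ pt3 0 0 0)) +ᵥ pt3 0 0 0 := by
      ext i
      fin_cases i <;>
        simp [pt3, hcdef, PiLp.add_apply, PiLp.smul_apply, PiLp.sub_apply] <;> ring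
    rw [hceq]; exact hmem
  -- attained point
  have hattain_mem : pt3 (x/2) (x/2) (-(x/2)) ∈ L \ F := by
    constructor
    · refine Set.mem_union_right _ ⟨![0, 0, -1], pt3_eq_iff.mpr ⟨?_, ?_, ?_⟩⟩ <;>
        simp [Matrix.cons_val_zero, Matrix.cons_val_one, Matrix.head_cons,
          Matrix.cons_val_two, Matrix.tail_cons] <;> ring
    · intro hF
      simp only [F, Set.mem_insert_iff, Set.mem_singleton_iff] at hF
      rcases hF with h | h | h
      · have := (pt3_eq_iff.mp h).2.1; linarith
      · have := (pt3_eq_iff.mp h).2.1; linarith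
      · have := (pt3_eq_iff.mp h).2.2; linarith
  have hattain_dist : dist (pt3 (x/2) (x/2) (-(x/2))) c = Real.sqrt 34 / 8 * x := by
    rw [hcdef, dist_pt3,
      show (x/2 - x/2)^2 + (x/2 - x/8)^2 + (-(x/2) - x/8)^2 = (Real.sqrt 34 / 8 * x)^2 by
        linear_combination (-(x^2) / 64) * h34]
    exact Real.sqrt_sq (mul_nonneg (by positivity) hx.le)
  -- lower bound
  have key : ∀ p ∈ L \ F, Real.sqrt 34 / 8 * x ≤ dist p c := by
    rintro p ⟨hpL, hpF⟩
    simp only [F, Set.mem_insert_iff, Set.mem_singleton_iff] at hpF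
    push_neg at hpF
    obtain ⟨hf1, hf2, hf3⟩ := hpF
    simp only [L, Set.mem_union, Set.mem_setOf_eq] at hpL
    rcases hpL with ⟨v, rfl⟩ | ⟨v, rfl⟩
    · rw [hcdef, dist_pt3,
        Real.le_sqrt (mul_nonneg (by positivity) hx.le) (by positivity)]
      have h0 : ¬(v 0 = 0 ∧ v 1 = 0 ∧ v 2 = 0) := by
        rintro ⟨ha, hb, hc⟩
        exact hf1 (pt3_eq_iff.mpr ⟨by rw [ha]; norm_num, by rw [hb]; norm_num,
          by rw [hc]; norm_num⟩)
      have h1 : ¬(v 0 = 1 ∧ v 1 = 0 ∧ v 2 = 0) := by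
        rintro ⟨ha, hb, hc⟩
        exact hf2 (pt3_eq_iff.mpr ⟨by rw [ha]; norm_num, by rw [hb]; norm_num,
          by rw [hc]; norm_num⟩)
      have hT := lb_typeA (v 0) (v 1) (v 2) h0 h1
      have hmul := mul_le_mul_of_nonneg_left hT (sq_nonneg x)
      nlinarith [hmul]
    · rw [hcdef, dist_pt3,
        Real.le_sqrt (mul_nonneg (by positivity) hx.le) (by positivity)]
      have h0 : ¬(v 0 = 0 ∧ v 1 = 0 ∧ v 2 = 0) := by
        rintro ⟨ha, hb, hc⟩
        exact hf3 (pt3_eq_iff.mpr ⟨by rw [ha]; push_cast; ring, by rw [hb]; push_cast; ring,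
          by rw [hc]; push_cast; ring⟩)
      have hT := lb_typeB (v 0) (v 1) (v 2) h0
      have hmul := mul_le_mul_of_nonneg_left hT (sq_nonneg x)
      nlinarith [hmul]
  refine ⟨?_, hc_span, ⟨⟨_, hattain_mem, hattain_dist⟩, ?_⟩, hattain_mem, hattain_dist,
    by ring, ?_, ?_⟩
  · intro p hp
    simp only [F, Set.mem_insert_iff, Set.mem_singleton_iff] at hp
    rcases hp with rfl | rfl | rfl
    · exact hF1
    · exact hF2
    · exact hF3
  · rintro r ⟨p, hp, rfl⟩
    exact key p hp
  · apply mul_pos (by linarith) hx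
  · intro p hp hlt'
    have hk := key p hp
    nlinarith [mul_pos (show (0:ℝ) < Real.sqrt 34 - 3 * Real.sqrt 2 by linarith) hx]
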